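/- Let R̂(η, β) be as in (P2) with D₁√(D₂D₃) = C and C, D₂, D₃ > 0. If 1/D₂ + 1/D₃ > 2, then there exist η ∈ (0,1] and β ∈ (0,1] such that R̂(η, β) > R̂(0, β'), for every β' ∈ [0,1]; equivalently, the optimal sensing duration ratio satisfies η* > 0. -/

import Mathlib

/-- The closed-form approximate average achievable rate `R̂(η, β)` of problem (P2). -/
noncomputable def Rhat (C D1 D2 D3 η β : ℝ) : ℝ :=
  η * Real.logb 2 (1 + C * (1 - β)) +
    (1 - η) * Real.logb 2 (1 + D1 * Real.sqrt ((η * β + D2) * (η * β + D3)))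

set_option maxHeartbeats 1000000 in
theorem stmt_18 (C D1 D2 D3 : ℝ) (hC : 0 < C) (h1 : 0 < D1) (h2 : 0 < D2)
    (h3 : 0 < D3) (hrel : D1 * Real.sqrt (D2 * D3) = C)
    (hcond : 1 / D2 + 1 / D3 > 2) :
    ∃ η ∈ Set.Ioc (0 : ℝ) 1, ∃ β ∈ Set.Ioc (0 : ℝ) 1,
      ∀ β' ∈ Set.Icc (0 : ℝ) 1, Rhat C D1 D2 D3 η β > Rhat C D1 D2 D3 0 β' := by
  set b : ℝ := C / (1 + C) with hbdef
  set κ : ℝ := (1 / D2 + 1 / D3) / 2 with hκdef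
  set ε : ℝ := κ - 1 with hεdef
  set a : ℝ := b * (1 + ε / 2) with hadef
  have hC1 : (0:ℝ) < 1 + C := by linarith
  have hb0 : 0 < b := div_pos hC hC1
  have hb1 : b < 1 := by rw [hbdef, div_lt_one hC1]; linarith
  have hε0 : 0 < ε := by rw [hεdef, hκdef]; linarith
  have hκ1 : κ = 1 + ε := by rw [hεdef]; ring
  have hκ0 : 0 < κ := by rw [hκ1]; linarith
  have ha0 : 0 < a := by rw [hadef]; positivity
  have hab : b < a := by
    rw [hadef]; nlinarith
  set t : ℝ := min (1/2) (min (b*ε/(4*a*(2+b))) (Real.sqrt ε / κ)) with htdef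
  have ht0 : 0 < t := by
    apply lt_min (by norm_num)
    apply lt_min
    · positivity
    · positivity
  have ht12 : t ≤ 1/2 := min_le_left _ _
  have hta : t ≤ b*ε/(4*a*(2+b)) := le_trans (min_le_right _ _) (min_le_left _ _)
  have htε : t ≤ Real.sqrt ε / κ := le_trans (min_le_right _ _) (min_le_right _ _)
  have ht1 : t ≤ 1 := by linarith
  clear_value b κ ε a t
  -- κ² t² ≤ ε
  have hκt : κ^2 * t^2 ≤ ε := by
    have h := mul_le_mul htε htε ht0.le (by positivity)
    have : t * t ≤ ε / κ^2 := by
      calc t * t ≤ (Real.sqrt ε / κ) * (Real.sqrt ε / κ) := h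
        _ = ε / κ^2 := by
          rw [div_mul_div_comm, Real.mul_self_sqrt hε0.le]; ring
    calc κ^2 * t^2 = κ^2 * (t * t) := by ring
      _ ≤ κ^2 * (ε / κ^2) := by nlinarith [sq_nonneg κ]
      _ = ε := by field_simp
  -- key polynomial inequality
  have hkey : b * (1 + a * t^2) < a * (1 - t) * (1 - b * t) := by
    have h1' : t * (a * (2 + b)) ≤ b * ε / 4 := by
      have h4 : 0 < 4*a*(2+b) := by positivity
      calc t * (a * (2+b)) ≤ (b*ε/(4*a*(2+b))) * (a*(2+b)) := by
            apply mul_le_mul_of_nonneg_right hta (by positivity)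
        _ = b * ε / 4 := by field_simp
    have hamb : a - b = b * ε / 2 := by rw [hadef]; ring
    nlinarith [mul_pos ht0 ht0, mul_pos ha0 ht0, mul_pos hb0 ht0,
      mul_nonneg (mul_nonneg ha0.le hb0.le) (mul_nonneg ht0.le ht0.le)]
  -- sqrt lower bound
  have hsq : Real.sqrt D2 * 0 = 0 := by ring
  have hs : Real.sqrt (D2*D3) * (1 + (1 + ε/2) * t^2)
      ≤ Real.sqrt ((t*t + D2) * (t*t + D3)) := by
    apply Real.le_sqrt_of_sq_le
    have hsd : Real.sqrt (D2*D3) ^ 2 = D2 * D3 := Real.sq_sqrt (by positivity)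
    have hDsum : D2 + D3 = 2 * κ * (D2 * D3) := by
      rw [hκdef]; field_simp; ring
    have h2κ : 2 * (1 + ε/2) + ε = 2 * κ := by rw [hκ1]; ring
    -- need: D2 D3 (1 + (1+ε/2)t²)² ≤ (t²+D2)(t²+D3)
    have hq : (1 + ε/2)^2 * t^2 ≤ ε := by
      have hκκ : (1 + ε/2)^2 ≤ κ^2 := by rw [hκ1]; nlinarith
      calc (1 + ε/2)^2 * t^2 ≤ κ^2 * t^2 :=
            mul_le_mul_of_nonneg_right hκκ (sq_nonneg t)
        _ ≤ ε := hκt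
    have expand : (t*t + D2) * (t*t + D3)
        = D2*D3 + 2*κ*(D2*D3)*t^2 + t^4 := by
      rw [← hDsum]; ring
    calc (Real.sqrt (D2*D3) * (1 + (1 + ε/2) * t^2))^2
        = D2*D3 * (1 + 2*(1+ε/2)*t^2 + (1+ε/2)^2*t^4) := by
          rw [mul_pow, hsd]; ring
      _ ≤ (t*t + D2) * (t*t + D3) := by
          rw [expand]
          have : D2*D3*((1+ε/2)^2*t^4) ≤ D2*D3*(ε*t^2) := by
            have := mul_le_mul_of_nonneg_left
              (mul_le_mul_of_nonneg_right hq (sq_nonneg t))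
              (by positivity : (0:ℝ) ≤ D2*D3)
            calc D2*D3*((1+ε/2)^2*t^4)
                = D2*D3*((1+ε/2)^2*t^2*t^2) := by ring
              _ ≤ D2*D3*(ε*t^2) := this
          have hmul : 2*(1+ε/2)*(D2*D3*t^2) + ε*(D2*D3*t^2) = 2*κ*(D2*D3*t^2) := by
            linear_combination (D2*D3*t^2) * h2κ
          linarith [this, hmul, sq_nonneg (t^2)]
  refine ⟨t, ⟨ht0, ht1⟩, t, ⟨ht0, ht1⟩, ?_⟩
  intro β' _
  -- compute Rhat at η = 0
  have hRhat0 : Rhat C D1 D2 D3 0 β' = Real.logb 2 (1 + C) := by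
    simp only [Rhat, zero_mul, one_mul, sub_zero, zero_add, hrel]
  rw [hRhat0]
  -- main inequality
  have hlog2 : (0:ℝ) < Real.log 2 := Real.log_pos (by norm_num)
  have hbt : b * t < 1 :=
    lt_of_le_of_lt (mul_le_of_le_one_right hb0.le ht1) hb1
  have hbt0 : 0 < 1 - b * t := by linarith
  have hat0 : 0 < 1 + a * t^2 := by positivity
  have hbC : b * (1 + C) = C := by rw [hbdef]; exact div_mul_cancel₀ _ hC1.ne'
  have hCtfact : 1 + C * (1 - t) = (1 + C) * (1 - b * t) := by
    linear_combination t * hbC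
  have hCt0 : 0 < 1 + C * (1 - t) := by rw [hCtfact]; positivity
  have hsnn : 0 ≤ Real.sqrt ((t*t + D2) * (t*t + D3)) := Real.sqrt_nonneg _
  have hDs : (1 + C) * (1 + a * t^2) ≤ 1 + D1 * Real.sqrt ((t*t + D2) * (t*t + D3)) := by
    have := mul_le_mul_of_nonneg_left hs h1.le
    have heq : D1 * (Real.sqrt (D2*D3) * (1 + (1 + ε/2) * t^2))
        = C * (1 + (1 + ε/2) * t^2) := by rw [← mul_assoc, hrel]
    have hae : (1 + C) * (1 + a * t^2) = 1 + C * (1 + (1 + ε/2) * t^2) := by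
      rw [hadef]; linear_combination ((1 + ε/2) * t^2) * hbC
    rw [heq] at this
    rw [hae]; linarith
  have hDs0 : 0 < 1 + D1 * Real.sqrt ((t*t + D2) * (t*t + D3)) := by
    have : (0:ℝ) < (1 + C) * (1 + a * t^2) := by positivity
    linarith
  -- log-level inequality
  have hlogCt : Real.log (1 + C * (1 - t)) = Real.log (1 + C) + Real.log (1 - b * t) := by
    rw [hCtfact, Real.log_mul (by positivity) (by positivity)]
  have hlogDs : Real.log (1 + C) + Real.log (1 + a * t^2)
      ≤ Real.log (1 + D1 * Real.sqrt ((t*t + D2) * (t*t + D3))) := by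
    calc Real.log (1 + C) + Real.log (1 + a * t^2)
        = Real.log ((1 + C) * (1 + a * t^2)) := (Real.log_mul (by positivity) (by positivity)).symm
      _ ≤ _ := Real.log_le_log (by positivity) hDs
  have hlb1 : -(b * t) / (1 - b * t) ≤ Real.log (1 - b * t) := by
    have := Real.one_sub_inv_le_log_of_pos hbt0
    have heq : 1 - (1 - b*t)⁻¹ = -(b*t)/(1 - b*t) := by field_simp; ring
    rw [heq] at this; linarith
  have hlb2 : a * t^2 / (1 + a * t^2) ≤ Real.log (1 + a * t^2) := by
    have := Real.one_sub_inv_le_log_of_pos hat0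
    have heq : 1 - (1 + a*t^2)⁻¹ = a*t^2/(1 + a*t^2) := by field_simp; ring
    rw [heq] at this; linarith
  have hpos : 0 < t * Real.log (1 - b * t) + (1 - t) * Real.log (1 + a * t^2) := by
    have h1t : 0 < 1 - t := by linarith
    have hfrac : t * (b * t / (1 - b * t)) < (1 - t) * (a * t^2 / (1 + a * t^2)) := by
      rw [mul_div_assoc', mul_div_assoc', div_lt_div_iff₀ hbt0 hat0]
      nlinarith [mul_pos ht0 ht0, hkey]
    have e1 : t * (-(b*t)/(1 - b*t)) = -(t * (b * t / (1 - b*t))) := by ring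
    nlinarith [mul_le_mul_of_nonneg_left hlb1 ht0.le,
      mul_le_mul_of_nonneg_left hlb2 h1t.le]
  have hkeylog : Real.log (1 + C) <
      t * Real.log (1 + C * (1 - t)) + (1 - t) *
        Real.log (1 + D1 * Real.sqrt ((t*t + D2) * (t*t + D3))) := by
    have h1t : (0:ℝ) ≤ 1 - t := by linarith
    have := mul_le_mul_of_nonneg_left hlogDs h1t
    rw [hlogCt]
    nlinarith
  -- convert to logb
  show Real.logb 2 (1 + C) <
    t * Real.logb 2 (1 + C * (1 - t)) + (1 - t) *
      Real.logb 2 (1 + D1 * Real.sqrt ((t*t + D2) * (t*t + D3)))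
  simp only [Real.logb]
  have hre : t * (Real.log (1 + C * (1 - t)) / Real.log 2) + (1 - t) *
      (Real.log (1 + D1 * Real.sqrt ((t*t + D2) * (t*t + D3))) / Real.log 2)
      = (t * Real.log (1 + C * (1 - t)) + (1 - t) *
        Real.log (1 + D1 * Real.sqrt ((t*t + D2) * (t*t + D3)))) / Real.log 2 := by
    ring
  rw [hre]
  exact (div_lt_div_iff_of_pos_right hlog2).mpr hkeylog
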